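/- The quantity m(t) := sup_{x,y ∈ ℝ} |R(t,x,y)| tends to 0 as t → ∞. -/

import Mathlib

noncomputable section
open MeasureTheory Real Filter

/-- The Mehler kernel `G(t,x,y)`, the integral kernel of `e^{-tH}` for the
harmonic oscillator `H = ½(-d²/dx² + x²)`. -/
def G (t x y : ℝ) : ℝ :=
  (2 * Real.pi * Real.sinh t) ^ (-(1 : ℝ) / 2) *
    Real.exp (-(((x ^ 2 + y ^ 2) * Real.cosh t - 2 * x * y) / (2 * Real.sinh t)))

/-- The leading error kernel `R(t,x,y)`. -/
def R (t x y : ℝ) : ℝ :=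
  G t x y * (t ^ 2 / 12) *
    (t * ((1 / 4) * (Real.exp t + Real.exp (-t)) / (Real.exp t - Real.exp (-t)) +
          ((Real.exp t + Real.exp (-t)) * x * y - (x ^ 2 + y ^ 2)) /
            (Real.exp t - Real.exp (-t)) ^ 2) +
      (1 / 16) * (1 + (4 * x * y - (Real.exp t + Real.exp (-t)) * (x ^ 2 + y ^ 2)) /
            (Real.exp t - Real.exp (-t))))

lemma s_exp_bound (s : ℝ) (hs : 0 ≤ s) : Real.exp (-(s/4)) * s ≤ 2 := by
  have a1 : s/8 + 1 ≤ Real.exp (s/8) := Real.add_one_le_exp _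
  have a1' : (s/8 + 1) * (s/8 + 1) ≤ Real.exp (s/8) * Real.exp (s/8) :=
    mul_le_mul a1 a1 (by linarith) (Real.exp_pos _).le
  have a2 : Real.exp (s/8) * Real.exp (s/8) = Real.exp (s/4) := by
    rw [← Real.exp_add]; ring_nf
  have a3 : s ≤ 2 * Real.exp (s/4) := by linarith [a1', a2, sq_nonneg (s - 8)]
  have a4 : Real.exp (-(s/4)) * Real.exp (s/4) = 1 := by
    rw [← Real.exp_add]; simp
  linarith [mul_le_mul_of_nonneg_left a3 (Real.exp_pos (-(s/4))).le, a4]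

set_option maxHeartbeats 1000000 in
/-- Bound on the bracket factor, with abstract variables. -/
lemma br_bound {t E e s p : ℝ} (ht : 2 ≤ t) (hE7 : 7 ≤ E) (he0 : 0 < e) (he1 : e ≤ 1)
    (hs0 : 0 ≤ s) (hp1 : 2*p ≤ s) (hp2 : -s ≤ 2*p) :
    |t * (1 / 4 * (E + e) / (E - e) + ((E + e) * p - s) / (E - e) ^ 2) +
      1 / 16 * (1 + (4 * p - (E + e) * s) / (E - e))| ≤
      t*(1/2 + 3*s/4) + 1/16 + 3*s/16 := by
  have ht0 : (0:ℝ) < t := by linarith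
  have hD0 : (0:ℝ) < E - e := by linarith
  have hD6 : (6:ℝ) ≤ E - e := by linarith
  have hEe : E + e ≤ 2*(E - e) := by linarith
  have hEe0 : (0:ℝ) < E + e := by linarith
  have hDne : (E - e) ≠ 0 := ne_of_gt hD0
  have hNum : t * (1 / 4 * (E + e) / (E - e) + ((E + e) * p - s) / (E - e) ^ 2) +
      1 / 16 * (1 + (4 * p - (E + e) * s) / (E - e)) =
      (t * ((1/4) * (E+e) * (E-e) + ((E+e)*p - s)) +
        (1/16) * ((E-e)^2 + (4*p - (E+e)*s) * (E-e))) / (E - e)^2 := by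
    field_simp
  rw [hNum, abs_div, abs_of_pos (by positivity : (0:ℝ) < (E-e)^2),
    div_le_iff₀ (by positivity : (0:ℝ) < (E-e)^2), abs_le]
  have hDD : 2*(E - e) ≤ (E - e)^2 := by nlinarith [hD6]
  have hDD' : (E - e) + 1 ≤ (3/4) * (E - e)^2 := by nlinarith [hD6]
  have hDD'' : (E - e) ≤ (3/4) * (E - e)^2 := by nlinarith [hD6]
  have k1 : -((E - e) * s) ≤ (E + e) * p := by
    linarith [mul_le_mul_of_nonneg_left hp2 hEe0.le,
      mul_le_mul_of_nonneg_right hEe hs0]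
  have k2 : (E + e) * p ≤ (E - e) * s := by
    linarith [mul_le_mul_of_nonneg_left hp1 hEe0.le,
      mul_le_mul_of_nonneg_right hEe hs0]
  constructor
  · -- lower bound
    have l2 : -( (3*t*s/4) * (E-e)^2 ) ≤ t * ((E+e)*p - s) := by
      have m1 := mul_le_mul_of_nonneg_left k1 ht0.le
      have m2 := mul_le_mul_of_nonneg_left hDD' (mul_nonneg ht0.le hs0)
      linarith [m1, m2]
    have l3 : -((3*s/16) * (E-e)^2) ≤ (1/16) * ((4*p - (E+e)*s) * (E-e)) := by
      have m0 : -(2*s) - 2*(E-e)*s ≤ 4*p - (E+e)*s := by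
        linarith [hp2, mul_le_mul_of_nonneg_right hEe hs0]
      have m1 := mul_le_mul_of_nonneg_left m0 (by linarith : (0:ℝ) ≤ (E-e)/16)
      have m2 := mul_le_mul_of_nonneg_left hDD (by linarith : (0:ℝ) ≤ s/16)
      linarith [m1, m2]
    have l1 : (0:ℝ) ≤ t * ((1/4) * (E+e) * (E-e)) := by positivity
    have l4 : (0:ℝ) ≤ (1/16) * (E-e)^2 := by positivity
    linarith [l1, l2, l3, l4, mul_nonneg ht0.le (sq_nonneg (E-e)),
      sq_nonneg (E-e), mul_nonneg hs0 (sq_nonneg (E-e))]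
  · -- upper bound
    have u1 : t * ((1/4) * (E+e) * (E-e)) ≤ (t/2) * (E-e)^2 := by
      have m := mul_le_mul_of_nonneg_left hEe (by positivity : (0:ℝ) ≤ t * (E-e) / 4)
      linarith [m]
    have u2 : t * ((E+e)*p - s) ≤ (3*t*s/4) * (E-e)^2 := by
      have m1 := mul_le_mul_of_nonneg_left k2 ht0.le
      have m2 := mul_le_mul_of_nonneg_left hDD'' (mul_nonneg ht0.le hs0)
      linarith [m1, m2, mul_nonneg ht0.le hs0]
    have u3 : (1/16) * ((4*p - (E+e)*s) * (E-e)) ≤ (3*s/16) * (E-e)^2 := by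
      have m0 : 4*p - (E+e)*s ≤ 2*s := by
        linarith [hp1, mul_nonneg hEe0.le hs0]
      have m1 := mul_le_mul_of_nonneg_left m0 (by linarith : (0:ℝ) ≤ (E-e)/16)
      have m2 := mul_le_mul_of_nonneg_left hDD (by linarith : (0:ℝ) ≤ s/16)
      linarith [m1, m2, mul_nonneg hs0 (sq_nonneg (E-e))]
    linarith [u1, u2, u3]

set_option maxHeartbeats 1000000 in
lemma R_bound {t : ℝ} (ht : 2 ≤ t) (x y : ℝ) :
    |R t x y| ≤ t ^ 3 * Real.exp (-t / 2) := by
  have ht0 : (0:ℝ) < t := by linarith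
  have hE7 : (7:ℝ) ≤ Real.exp t := by
    have h1 : (2.7182818283:ℝ) < Real.exp 1 := Real.exp_one_gt_d9
    have h2 : Real.exp 2 ≤ Real.exp t := Real.exp_le_exp.mpr ht
    have h3 : Real.exp 2 = Real.exp 1 * Real.exp 1 := by rw [← Real.exp_add]; norm_num
    nlinarith
  have he1 : Real.exp (-t) ≤ 1 := by
    rw [show (1:ℝ) = Real.exp 0 by simp]
    exact Real.exp_le_exp.mpr (by linarith)
  have he0 : 0 < Real.exp (-t) := Real.exp_pos _
  unfold R G
  rw [Real.sinh_eq, Real.cosh_eq]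
  set E := Real.exp t with hEdef
  set e := Real.exp (-t) with hedef
  set s := x ^ 2 + y ^ 2 with hsdef
  have hs0 : 0 ≤ s := by positivity
  have hp1 : 2*(x*y) ≤ s := by rw [hsdef]; nlinarith [sq_nonneg (x - y)]
  have hp2 : -s ≤ 2*(x*y) := by rw [hsdef]; nlinarith [sq_nonneg (x + y)]
  have hD0 : (0:ℝ) < E - e := by linarith
  set A := (2 * Real.pi * ((E - e) / 2)) ^ (-(1:ℝ) / 2) with hAdef
  set Ex := Real.exp (-((s * ((E + e) / 2) - 2 * x * y) / (2 * ((E - e) / 2)))) with hExdef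
  set Br := t * (1 / 4 * (E + e) / (E - e) + ((E + e) * x * y - s) / (E - e) ^ 2) +
      1 / 16 * (1 + (4 * x * y - (E + e) * s) / (E - e)) with hBrdef
  have hApos : 0 < A := Real.rpow_pos_of_pos (by positivity) _
  -- bound on A
  have hA2 : A ≤ 2 * Real.exp (-t / 2) := by
    have hq : E / 4 ≤ 2 * Real.pi * ((E - e) / 2) := by
      nlinarith [Real.pi_gt_three]
    have h8 : A ≤ (E / 4) ^ (-(1:ℝ) / 2) :=
      Real.rpow_le_rpow_of_nonpos (by positivity) hq (by norm_num)
    have h9 : (E / 4 : ℝ) ^ (-(1:ℝ) / 2) = 2 * Real.exp (-t / 2) := by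
      rw [Real.div_rpow (by positivity) (by norm_num)]
      rw [hEdef, ← Real.exp_mul]
      have h4 : ((4:ℝ)) ^ (-(1:ℝ) / 2) = 1/2 := by
        rw [show (-(1:ℝ)/2) = -(1/2) by ring, Real.rpow_neg (by norm_num)]
        rw [show ((4:ℝ)) ^ ((1:ℝ)/2) = 2 by
          rw [← Real.sqrt_eq_rpow, show (4:ℝ) = 2^2 by norm_num, Real.sqrt_sq (by norm_num)]]
        norm_num
      rw [h4]
      rw [show t * (-(1:ℝ)/2) = -t/2 by ring]
      ring
    linarith [h8, h9.le]
  -- bound on Ex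
  have hEx1 : Ex ≤ Real.exp (-(s/4)) := by
    rw [hExdef]
    apply Real.exp_le_exp.mpr
    rw [neg_le_neg_iff, div_le_div_iff₀ (by norm_num) (by linarith : (0:ℝ) < 2 * ((E - e)/2))]
    nlinarith [hp1, mul_nonneg hs0 (show (0:ℝ) ≤ E + 3*e - 4 by linarith)]
  have hExpos : 0 < Ex := Real.exp_pos _
  -- bound on Br
  have hBr : |Br| ≤ t*(1/2 + 3*s/4) + 1/16 + 3*s/16 := by
    rw [hBrdef, show (E + e) * x * y = (E + e) * (x * y) by ring,
      show 4 * x * y = 4 * (x * y) by ring]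
    exact br_bound ht hE7 he0 he1 hs0 hp1 hp2
  -- combine Ex and Br
  have hExBr : Ex * |Br| ≤ 3 * t := by
    have h5 : Ex * |Br| ≤ Real.exp (-(s/4)) * (t*(1/2 + 3*s/4) + 1/16 + 3*s/16) :=
      mul_le_mul hEx1 hBr (abs_nonneg _) (Real.exp_pos _).le
    have h3 := s_exp_bound s hs0
    have h4 : Real.exp (-(s/4)) ≤ 1 := by
      rw [show (1:ℝ) = Real.exp 0 by simp]
      exact Real.exp_le_exp.mpr (by linarith)
    nlinarith [h5, mul_le_mul_of_nonneg_left h3 (by linarith : (0:ℝ) ≤ 3*t/4 + 3/16),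
      mul_le_mul_of_nonneg_left h4 (by linarith : (0:ℝ) ≤ t/2 + 1/16)]
  -- final assembly
  have habs : |A * Ex * (t^2/12) * Br| = (A * (t^2/12)) * (Ex * |Br|) := by
    rw [abs_mul, abs_mul, abs_mul, abs_of_pos hApos, abs_of_pos hExpos,
      abs_of_nonneg (by positivity : (0:ℝ) ≤ t^2/12)]
    ring
  rw [habs]
  have hfin : (A * (t^2/12)) * (Ex * |Br|) ≤ (2 * Real.exp (-t/2) * (t^2/12)) * (3*t) := by
    apply mul_le_mul _ hExBr (by positivity) (by positivity)
    exact mul_le_mul_of_nonneg_right hA2 (by positivity)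
  nlinarith [hfin, mul_nonneg (pow_pos ht0 3).le (Real.exp_pos (-t/2)).le]

/-- `m(t) = sup_{x,y} |R(t,x,y)|` tends to `0` as `t → ∞`. -/
theorem R_sup_tendsto_zero_at_infinity :
    Tendsto (fun t : ℝ => ⨆ p : ℝ × ℝ, |R t p.1 p.2|) atTop (nhds 0) := by
  have hbdd : ∀ t : ℝ, 2 ≤ t → BddAbove (Set.range fun q : ℝ × ℝ => |R t q.1 q.2|) := by
    intro t ht
    refine ⟨t^3 * Real.exp (-t/2), ?_⟩
    rintro _ ⟨q, rfl⟩
    exact R_bound ht q.1 q.2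
  have hg : Tendsto (fun t : ℝ => t^3 * Real.exp (-t/2)) atTop (nhds 0) := by
    have h0 : Tendsto (fun x : ℝ => x ^ (3:ℝ) * Real.exp (-(1/2) * x)) atTop (nhds 0) :=
      tendsto_rpow_mul_exp_neg_mul_atTop_nhds_zero 3 (1/2) (by norm_num)
    refine h0.congr' ?_
    filter_upwards [eventually_gt_atTop (0:ℝ)] with x hx
    rw [show ((3:ℝ)) = ((3:ℕ):ℝ) by norm_num, Real.rpow_natCast,
      show -(1/2) * x = -x/2 by ring]
  apply squeeze_zero' ?_ ?_ hg
  · filter_upwards [eventually_ge_atTop (2:ℝ)] with t ht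
    have h1 : |R t 0 0| ≤ ⨆ p : ℝ × ℝ, |R t p.1 p.2| :=
      le_ciSup (hbdd t ht) ((0:ℝ), (0:ℝ))
    exact le_trans (abs_nonneg _) h1
  · filter_upwards [eventually_ge_atTop (2:ℝ)] with t ht
    exact ciSup_le fun q => R_bound ht q.1 q.2
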